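/- Mass transfer formula at the internal interfaces. Let N ≥ 1 and let l_1,…,l_N be positive reals with Σ_{γ=1}^N l_γ = 1. Let h : ℝ×ℝ² → ℝ, u_1,…,u_N : ℝ×ℝ² → ℝ², and G_{α+1/2} : ℝ×ℝ² → ℝ for α = 0,…,N be continuously differentiable with G_{N+1/2} = 0. Assume that for each α = 1,…,N the mass equation ∂_t(l_α h) + div(l_α h u_α) = G_{α+1/2} − G_{α−1/2} holds at every point. Then for every α = 1,…,N and every point: G_{α+1/2} = (1 − L_α) G_{1/2} + Σ_{γ=1}^N ξ_{α,γ} div(h u_γ), where L_α := l_1 + ⋯ + l_α and ξ_{α,γ} := (1 − L_α) l_γ if γ ≤ α and ξ_{α,γ} := −L_α l_γ if γ > α. -/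

import Mathlib

/-- Partial derivative in time (first coordinate of `ℝ × ℝ × ℝ`). -/
noncomputable def pt (f : ℝ × ℝ × ℝ → ℝ) (p : ℝ × ℝ × ℝ) : ℝ := fderiv ℝ f p (1, 0, 0)

/-- Partial derivative in the first spatial coordinate. -/
noncomputable def px (f : ℝ × ℝ × ℝ → ℝ) (p : ℝ × ℝ × ℝ) : ℝ := fderiv ℝ f p (0, 1, 0)

/-- Partial derivative in the second spatial coordinate. -/
noncomputable def py (f : ℝ × ℝ × ℝ → ℝ) (p : ℝ × ℝ × ℝ) : ℝ := fderiv ℝ f p (0, 0, 1)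

/-- Spatial divergence of a planar vector field. -/
noncomputable def div2 (v : ℝ × ℝ × ℝ → ℝ × ℝ) (p : ℝ × ℝ × ℝ) : ℝ :=
  px (fun q => (v q).1) p + py (fun q => (v q).2) p

lemma fderiv_const_mul_apply (c : ℝ) (f : ℝ × ℝ × ℝ → ℝ) (p v : ℝ × ℝ × ℝ)
    (hf : DifferentiableAt ℝ f p) :
    fderiv ℝ (fun q => c * f q) p v = c * fderiv ℝ f p v := by
  rw [fderiv_const_mul hf]; simp

lemma pt_const_mul (c : ℝ) (f : ℝ × ℝ × ℝ → ℝ) (p : ℝ × ℝ × ℝ)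
    (hf : DifferentiableAt ℝ f p) :
    pt (fun q => c * f q) p = c * pt f p :=
  fderiv_const_mul_apply c f p _ hf

lemma div2_const_smul (c : ℝ) (h : ℝ × ℝ × ℝ → ℝ) (u : ℝ × ℝ × ℝ → ℝ × ℝ)
    (p : ℝ × ℝ × ℝ) (hh : DifferentiableAt ℝ h p) (hu : DifferentiableAt ℝ u p) :
    div2 (fun q => (c * h q) • u q) p = c * div2 (fun q => h q • u q) p := by
  have e1 : (fun q : ℝ × ℝ × ℝ => (((c * h q) • u q : ℝ × ℝ)).1)
      = fun q => c * (h q * (u q).1) := by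
    funext q; simp [Prod.smul_fst, smul_eq_mul]; ring
  have e2 : (fun q : ℝ × ℝ × ℝ => (((c * h q) • u q : ℝ × ℝ)).2)
      = fun q => c * (h q * (u q).2) := by
    funext q; simp [Prod.smul_snd, smul_eq_mul]; ring
  have e3 : (fun q : ℝ × ℝ × ℝ => ((h q • u q : ℝ × ℝ)).1)
      = fun q => h q * (u q).1 := by
    funext q; simp [Prod.smul_fst, smul_eq_mul]
  have e4 : (fun q : ℝ × ℝ × ℝ => ((h q • u q : ℝ × ℝ)).2)
      = fun q => h q * (u q).2 := by
    funext q; simp [Prod.smul_snd, smul_eq_mul]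
  unfold div2 px py
  rw [e1, e2, e3, e4,
    fderiv_const_mul_apply c (fun q => h q * (u q).1) p _ (hh.mul hu.fst),
    fderiv_const_mul_apply c (fun q => h q * (u q).2) p _ (hh.mul hu.snd)]
  ring

/-- Mass transfer formula at the internal interfaces of the multilayer model. -/
theorem mass_transfer_formula
    (N : ℕ) (hN : 1 ≤ N)
    (l : ℕ → ℝ) (l_pos : ∀ α ∈ Finset.Icc 1 N, 0 < l α)
    (l_sum : ∑ γ ∈ Finset.Icc 1 N, l γ = 1)
    (h : ℝ × ℝ × ℝ → ℝ) (u : ℕ → ℝ × ℝ × ℝ → ℝ × ℝ)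
    (G : ℕ → ℝ × ℝ × ℝ → ℝ)
    -- regularity assumptions
    (h_smooth : ContDiff ℝ 1 h)
    (u_smooth : ∀ α ∈ Finset.Icc 1 N, ContDiff ℝ 1 (u α))
    (G_smooth : ∀ α ∈ Finset.Icc 0 N, ContDiff ℝ 1 (G α))
    -- no mass transfer with the atmosphere
    (G_top : ∀ p, G N p = 0)
    -- partial sums and coefficients
    (L : ℕ → ℝ) (hL : ∀ α, L α = ∑ β ∈ Finset.Icc 1 α, l β)
    (ξ : ℕ → ℕ → ℝ)
    (hξ : ∀ α γ, ξ α γ = if γ ≤ α then (1 - L α) * l γ else -(L α * l γ))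
    -- layer mass equations
    (mass_eq : ∀ α ∈ Finset.Icc 1 N, ∀ p,
      pt (fun q => l α * h q) p + div2 (fun q => (l α * h q) • u α q) p
        = G α p - G (α - 1) p) :
    ∀ α ∈ Finset.Icc 1 N, ∀ p,
      G α p = (1 - L α) * G 0 p
        + ∑ γ ∈ Finset.Icc 1 N, ξ α γ * div2 (fun q => h q • u γ q) p := by
  intro α hα p
  simp only [Finset.mem_Icc] at hα
  set D : ℕ → ℝ := fun γ => div2 (fun q => h q • u γ q) p with hD
  have hhd : DifferentiableAt ℝ h p := (h_smooth.differentiable one_ne_zero) p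
  -- rewritten mass equation
  have step : ∀ β ∈ Finset.Icc 1 N,
      G β p - G (β - 1) p = l β * pt h p + l β * D β := by
    intro β hβ
    have hud : DifferentiableAt ℝ (u β) p :=
      ((u_smooth β hβ).differentiable one_ne_zero) p
    have := mass_eq β hβ p
    rw [pt_const_mul _ _ _ hhd, div2_const_smul _ _ _ _ hhd hud] at this
    linarith [this]
  -- telescoping
  have tele : ∀ β, β ≤ N →
      G β p = G 0 p + (∑ γ ∈ Finset.Icc 1 β, l γ) * pt h p
        + ∑ γ ∈ Finset.Icc 1 β, l γ * D γ := by
    intro β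
    induction β with
    | zero => intro _; simp
    | succ n ih =>
      intro hn
      have hmem : n + 1 ∈ Finset.Icc 1 N := Finset.mem_Icc.mpr ⟨Nat.succ_le_succ n.zero_le, hn⟩
      have hstep := step (n + 1) hmem
      simp only [Nat.add_sub_cancel] at hstep
      have ihn := ih (Nat.le_of_succ_le hn)
      rw [Finset.sum_Icc_succ_top (Nat.succ_le_succ n.zero_le),
          Finset.sum_Icc_succ_top (Nat.succ_le_succ n.zero_le)]
      have : G (n+1) p = G n p + (l (n+1) * pt h p + l (n+1) * D (n+1)) := by linarith
      rw [this, ihn]; ring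
  have tα := tele α hα.2
  have tN := tele N le_rfl
  rw [G_top p, l_sum] at tN
  -- split the ξ sum
  have hsplit : ∑ γ ∈ Finset.Icc 1 N, ξ α γ * D γ
      = (∑ γ ∈ Finset.Icc 1 α, l γ * D γ) - L α * ∑ γ ∈ Finset.Icc 1 N, l γ * D γ := by
    have : ∀ γ ∈ Finset.Icc 1 N, ξ α γ * D γ
        = (if γ ≤ α then l γ * D γ else 0) - L α * (l γ * D γ) := by
      intro γ _
      rw [hξ]
      by_cases hc : γ ≤ α <;> simp [hc] <;> ring
    rw [Finset.sum_congr rfl this, Finset.sum_sub_distrib, ← Finset.mul_sum,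
      ← Finset.sum_filter]
    congr 1
    apply Finset.sum_congr _ (fun _ _ => rfl)
    ext γ
    simp only [Finset.mem_filter, Finset.mem_Icc]
    omega
  rw [hsplit, hL α] at *
  set S := ∑ γ ∈ Finset.Icc 1 α, l γ
  linear_combination tα - S * tN
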